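/- Among all Dyck paths from (0,0) to (n+2k, n), the path P = (10)^k 1^n (k up-down pairs followed by n up-steps) has the unique maximum comajor index, equal to k(n+k). -/

import Mathlib

def IsDyckWord (w : List Bool) : Prop :=
  ∀ p : List Bool, p <+: w → p.count false ≤ p.count true

def EndsAt (w : List Bool) (n : ℕ) : Prop :=
  w.count true = w.count false + n

def descents (w : List Bool) : Finset ℕ :=
  (Finset.Ico 1 w.length).filter
    (fun i => w.getD (i - 1) false = true ∧ w.getD i false = false)

def comaj (w : List Bool) : ℕ := ∑ i ∈ descents w, (w.length - i)

lemma count_tf (l : List Bool) : l.count true + l.count false = l.length := by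
  induction l with
  | nil => simp
  | cons a l ih => cases a <;> simp [List.count_cons] <;> omega

lemma card_filter_getD (w : List Bool) (m : ℕ) (hm : m ≤ w.length) :
    ((Finset.range m).filter (fun i => w.getD i false = false)).card
      = (w.take m).count false := by
  induction m with
  | zero => simp
  | succ m ih =>
    have hm' : m ≤ w.length := Nat.le_of_succ_le hm
    rw [Finset.range_add_one, Finset.filter_insert]
    have ht : w.take (m+1) = w.take m ++ [w.get ⟨m, hm⟩] := by
      rw [List.take_succ]
      simp [List.getElem?_eq_getElem hm, List.get_eq_getElem]
    have hg : w.getD m false = w.get ⟨m, hm⟩ := by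
      simp [List.getD, List.getElem?_eq_getElem hm, List.get_eq_getElem]
    by_cases h : w.getD m false = false
    · rw [if_pos h, Finset.card_insert_of_notMem (by simp), ih hm', ht]
      rw [List.count_append, ← hg, h]
      simp
    · rw [if_neg h, ih hm', ht]
      rw [List.count_append]
      have : w.get ⟨m, hm⟩ = true := by
        rw [← hg]; revert h; cases w.getD m false <;> simp
      simp [List.get_eq_getElem] at this
      simp [this]

lemma sumF : ∀ (k : ℕ) (F : Finset ℕ), F.card = k →
    (∀ i ∈ F, 2 * (F.filter (· ≤ i)).card ≤ i + 1) →
    k ^ 2 ≤ ∑ i ∈ F, i ∧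
      (∑ i ∈ F, i = k ^ 2 → F = (Finset.range k).image (fun j => 2 * j + 1)) := by
  intro k
  induction k with
  | zero =>
    intro F hc _
    rw [Finset.card_eq_zero] at hc
    simp [hc]
  | succ k ih =>
    intro F hc hcond
    have hne : F.Nonempty := Finset.card_pos.mp (by omega)
    set m := F.max' hne with hm
    have hmF : m ∈ F := F.max'_mem hne
    have hfull : F.filter (· ≤ m) = F := by
      apply Finset.filter_true_of_mem
      intro i hi
      exact F.le_max' i hi
    have hmb : 2 * (k + 1) ≤ m + 1 := by
      have := hcond m hmF
      rwa [hfull, hc] at this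
    set F' := F.erase m with hF'
    have hc' : F'.card = k := by
      rw [hF', Finset.card_erase_of_mem hmF, hc]
      omega
    have hcond' : ∀ i ∈ F', 2 * (F'.filter (· ≤ i)).card ≤ i + 1 := by
      intro i hi
      have hsub : F'.filter (· ≤ i) ⊆ F.filter (· ≤ i) :=
        Finset.filter_subset_filter _ (Finset.erase_subset _ _)
      have := hcond i (Finset.mem_of_mem_erase hi)
      have := Finset.card_le_card hsub
      omega
    obtain ⟨hle, heq⟩ := ih F' hc' hcond'
    have hsum : ∑ i ∈ F, i = m + ∑ i ∈ F', i := by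
      rw [hF', ← Finset.add_sum_erase _ (fun i => i) hmF]
    constructor
    · rw [hsum]; nlinarith
    · intro h
      have hm1 : m = 2 * k + 1 := by nlinarith
      have hs' : ∑ i ∈ F', i = k ^ 2 := by nlinarith
      have hF'eq := heq hs'
      have : F = insert m F' := by
        rw [hF', Finset.insert_erase hmF]
      rw [this, hF'eq, hm1, Finset.range_add_one, Finset.image_insert]

lemma flat_succ (k : ℕ) : (List.replicate (k+1) [true,false]).flatten
    = true :: false :: (List.replicate k [true,false]).flatten := by
  simp [List.replicate_succ]

lemma flat_length (k : ℕ) : (List.replicate k [true,false]).flatten.length = 2*k := by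
  induction k with
  | zero => simp
  | succ k ih => rw [flat_succ]; simp only [List.length_cons]; omega

lemma flat_count (k : ℕ) (b : Bool) : (List.replicate k [true,false]).flatten.count b = k := by
  induction k with
  | zero => simp
  | succ k ih => rw [flat_succ]; cases b <;> simp [List.count_cons, ih]

lemma flat_getD (k : ℕ) : ∀ i, i < 2*k →
    (List.replicate k [true,false]).flatten.getD i false = decide (i % 2 = 0) := by
  induction k with
  | zero => omega
  | succ k ih =>
    intro i hi
    rw [flat_succ]
    rcases i with _ | _ | i
    · simp
    · simp
    · rw [List.getD_cons_succ, List.getD_cons_succ, ih i (by omega)]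
      have : (i + 1 + 1) % 2 = i % 2 := by omega
      rw [this]

lemma dyck_cons {w : List Bool} (h : IsDyckWord w) : IsDyckWord (true :: false :: w) := by
  intro p hp
  rcases p with _ | ⟨a, p⟩
  · simp
  rw [List.cons_prefix_cons] at hp
  obtain ⟨rfl, hp⟩ := hp
  rcases p with _ | ⟨b, p⟩
  · simp
  rw [List.cons_prefix_cons] at hp
  obtain ⟨rfl, hp⟩ := hp
  have := h p hp
  simp [List.count_cons]
  omega

lemma dyck_rep (n : ℕ) : IsDyckWord (List.replicate n true) := by
  intro p hp
  have h1 := hp.sublist.count_le false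
  simp [List.count_replicate] at h1
  simp [h1]

lemma dyck_P (n k : ℕ) :
    IsDyckWord ((List.replicate k [true,false]).flatten ++ List.replicate n true) := by
  induction k with
  | zero => simpa using dyck_rep n
  | succ k ih => rw [flat_succ, List.cons_append, List.cons_append]; exact dyck_cons ih

lemma oddsum (k : ℕ) : ∑ j ∈ Finset.range k, (2*j+1) = k^2 := by
  induction k with
  | zero => simp
  | succ k ih =>
    rw [Finset.sum_range_succ, ih]
    have : (k+1)^2 = k^2 + 2*k + 1 := by ring
    omega

lemma bound (n k : ℕ) (Q : List Bool) (hD : IsDyckWord Q) (hL : Q.length = n + 2*k)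
    (hE : EndsAt Q n) :
    comaj Q ≤ k * (n + k) ∧
      (comaj Q = k * (n + k) →
        ∀ i, i < n + 2*k → (Q.getD i false = false ↔ (i < 2*k ∧ i % 2 = 1))) := by
  set s := n + 2*k with hs
  set F := (Finset.range s).filter (fun i => Q.getD i false = false) with hF
  have hcf : Q.count false = k := by
    have h1 := count_tf Q
    rw [hL] at h1
    unfold EndsAt at hE
    omega
  have hcard : F.card = k := by
    rw [hF, ← hL, card_filter_getD Q Q.length le_rfl, List.take_length, hcf]
  have hcond : ∀ i ∈ F, 2 * (F.filter (· ≤ i)).card ≤ i + 1 := by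
    intro i hi
    rw [hF, Finset.mem_filter, Finset.mem_range] at hi
    obtain ⟨his, hifalse⟩ := hi
    have hfe : F.filter (· ≤ i) = (Finset.range (i+1)).filter (fun j => Q.getD j false = false) := by
      ext j
      simp only [hF, Finset.mem_filter, Finset.mem_range]
      constructor
      · rintro ⟨⟨_, h2⟩, h3⟩; exact ⟨by omega, h2⟩
      · rintro ⟨h1, h2⟩; exact ⟨⟨by omega, h2⟩, by omega⟩
    have hi1 : i + 1 ≤ Q.length := by omega
    rw [hfe, card_filter_getD Q (i+1) hi1]
    have hdy := hD (Q.take (i+1)) (List.take_prefix _ _)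
    have hct := count_tf (Q.take (i+1))
    rw [List.length_take] at hct
    have : min (i+1) Q.length = i + 1 := by omega
    omega
  obtain ⟨hge, heqc⟩ := sumF k F hcard hcond
  have hsub : descents Q ⊆ F := by
    intro i hi
    unfold descents at hi
    rw [Finset.mem_filter, Finset.mem_Ico] at hi
    rw [hF, Finset.mem_filter, Finset.mem_range]
    exact ⟨by omega, hi.2.2⟩
  have hsum2 : (∑ i ∈ F, (s - i)) + ∑ i ∈ F, i = k * s := by
    rw [← Finset.sum_add_distrib]
    have : ∀ i ∈ F, s - i + i = s := by
      intro i hi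
      rw [hF, Finset.mem_filter, Finset.mem_range] at hi
      omega
    rw [Finset.sum_congr rfl this, Finset.sum_const, hcard, smul_eq_mul]
  have hcomaj : comaj Q = ∑ i ∈ descents Q, (s - i) := by
    unfold comaj; rw [hL]
  have hle1 : comaj Q ≤ ∑ i ∈ F, (s - i) := by
    rw [hcomaj]
    exact Finset.sum_le_sum_of_subset hsub
  have hks : k * s = k * (n + k) + k ^ 2 := by rw [hs]; ring
  constructor
  · omega
  · intro heq i his
    have hFi : ∑ i ∈ F, i = k ^ 2 := by omega
    have hFeq := heqc hFi
    constructor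
    · intro hfalse
      have : i ∈ F := by
        rw [hF, Finset.mem_filter, Finset.mem_range]; exact ⟨his, hfalse⟩
      rw [hFeq, Finset.mem_image] at this
      obtain ⟨j, hj, hji⟩ := this
      rw [Finset.mem_range] at hj
      omega
    · rintro ⟨h2k, hodd⟩
      have : i ∈ F := by
        rw [hFeq, Finset.mem_image]
        exact ⟨i / 2, Finset.mem_range.mpr (by omega), by omega⟩
      rw [hF, Finset.mem_filter] at this
      exact this.2

lemma P_length (n k : ℕ) :
    ((List.replicate k [true,false]).flatten ++ List.replicate n true).length = n + 2*k := by
  rw [List.length_append, flat_length, List.length_replicate]; omega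

lemma P_getD (n k : ℕ) (i : ℕ) (hi : i < n + 2*k) :
    (((List.replicate k [true,false]).flatten ++ List.replicate n true).getD i false = false)
      ↔ (i < 2*k ∧ i % 2 = 1) := by
  by_cases h : i < 2*k
  · rw [List.getD_append _ _ _ _ (by rw [flat_length]; omega), flat_getD k i h]
    rcases Nat.even_or_odd i with he | ho
    · obtain ⟨m, hm⟩ := he
      simp only [decide_eq_false_iff_not]
      constructor
      · intro hc; exact absurd (by omega) hc
      · omega
    · obtain ⟨m, hm⟩ := ho
      have : ¬ (i % 2 = 0) := by omega
      simp only [this, decide_false]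
      exact ⟨fun _ => ⟨h, by omega⟩, fun _ => trivial⟩
  · rw [List.getD_append_right _ _ _ _ (by rw [flat_length]; omega)]
    rw [flat_length]
    have hlt : i - 2*k < (List.replicate n true).length := by
      rw [List.length_replicate]; omega
    rw [List.getD_eq_getElem _ _ hlt, List.getElem_replicate]
    simp
    omega

lemma P_getD_true (n k : ℕ) (j : ℕ) (hj : j < k) :
    (((List.replicate k [true,false]).flatten ++ List.replicate n true).getD (2*j) false = true) := by
  rw [List.getD_append _ _ _ _ (by rw [flat_length]; omega), flat_getD k (2*j) (by omega)]
  simp [Nat.mul_mod_right]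

/-- Among all Dyck paths from (0,0) to (n+2k, n), the path
`P = (10)^k 1^n` has the unique maximum comajor index, equal to `k(n+k)`. -/
theorem stmt3 (n k : ℕ) :
    let P : List Bool := (List.replicate k [true, false]).flatten ++ List.replicate n true
    IsDyckWord P ∧ P.length = n + 2 * k ∧ EndsAt P n ∧ comaj P = k * (n + k) ∧
    ∀ Q : List Bool, IsDyckWord Q → Q.length = n + 2 * k → EndsAt Q n → Q ≠ P →
      comaj Q < k * (n + k) := by
  intro P
  have hPdef : P = (List.replicate k [true, false]).flatten ++ List.replicate n true := rfl
  have hPL : P.length = n + 2*k := P_length n k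
  have hPD : IsDyckWord P := dyck_P n k
  have hPE : EndsAt P n := by
    unfold EndsAt
    rw [hPdef, List.count_append, List.count_append, flat_count, flat_count,
      List.count_replicate, List.count_replicate]
    simp
  have hPb := bound n k P hPD hPL hPE
  -- image subset of descents P
  have himg : (Finset.range k).image (fun j => 2*j+1) ⊆ descents P := by
    intro i hi
    rw [Finset.mem_image] at hi
    obtain ⟨j, hj, rfl⟩ := hi
    rw [Finset.mem_range] at hj
    unfold descents
    rw [Finset.mem_filter, Finset.mem_Ico, hPL]
    refine ⟨⟨by omega, by omega⟩, ?_, ?_⟩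
    · have : 2*j + 1 - 1 = 2*j := by omega
      rw [this]
      exact P_getD_true n k j hj
    · rw [(P_getD n k (2*j+1) (by omega))]
      omega
  have hsumimg : ∑ i ∈ (Finset.range k).image (fun j => 2*j+1), (P.length - i) = k * (n+k) := by
    rw [Finset.sum_image (by intro a _ b _ h; simp only at h; omega)]
    have h1 : (∑ j ∈ Finset.range k, (P.length - (2*j+1))) + ∑ j ∈ Finset.range k, (2*j+1)
        = k * (n + 2*k) := by
      rw [← Finset.sum_add_distrib]
      have : ∀ j ∈ Finset.range k, P.length - (2*j+1) + (2*j+1) = n + 2*k := by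
        intro j hj
        rw [Finset.mem_range] at hj
        rw [hPL]
        omega
      rw [Finset.sum_congr rfl this, Finset.sum_const, Finset.card_range, smul_eq_mul]
    have h2 := oddsum k
    have h3 : k * (n + 2*k) = k * (n+k) + k^2 := by ring
    omega
  have hPc : comaj P = k * (n + k) := by
    have hge : k * (n+k) ≤ comaj P := by
      rw [← hsumimg]
      exact Finset.sum_le_sum_of_subset himg
    omega
  refine ⟨hPD, hPL, hPE, hPc, ?_⟩
  intro Q hQD hQL hQE hne
  have hQb := bound n k Q hQD hQL hQE
  rcases lt_or_eq_of_le hQb.1 with h | h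
  · exact h
  · exfalso
    apply hne
    apply List.ext_getElem (by rw [hQL, hPL])
    intro i h1 h2
    have hi : i < n + 2*k := by omega
    have hQi := hQb.2 h i hi
    have hPi := P_getD n k i hi
    rw [List.getD_eq_getElem _ _ h1] at hQi
    rw [List.getD_eq_getElem _ _ (show i < ((List.replicate k [true, false]).flatten ++ List.replicate n true).length from h2)] at hPi
    cases hq : Q[i] <;> cases hp : P[i]
    · rfl
    · rw [hq] at hQi; rw [hp] at hPi
      have := hQi.1 rfl
      simp at hPi
      omega
    · rw [hq] at hQi; rw [hp] at hPi
      have := hPi.1 rfl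
      simp at hQi
      omega
    · rfl
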